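/- Let n ≥ 1 and let π : Fin n → Fin n be an involution (π ∘ π = id), encoding a layer of controlled-Z gates on the disjoint pairs {i, π(i)} with π(i) ≠ i. Let CZ_π be the diagonal 2^n × 2^n matrix with entry (−1)^{∑_{i : i < π(i)} x(i)·x(π(i))} at basis index x : Fin n → Fin 2. Then for all bit strings α, α' : Fin n → Fin 2 there exist β : Fin n → Fin 2 and a sign ω ∈ {1, −1} such that CZ_π · (⊗_{i} X^{α'(i)} Z^{α(i)}) = ω • (⊗_{i} X^{α'(i)} Z^{α(i) + β(i) mod 2}) · CZ_π, where β(i) = α'(π(i)) if π(i) ≠ i and β(i) = 0 if π(i) = i. (The propagation rule, generalizing the identities (X⊗I)cZ = cZ(X⊗Z) and (Z⊗I)cZ = cZ(Z⊗I), by which the quantum one-time pad is pushed through a band of cZ gates.) -/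

import Mathlib

open Matrix

/-- The Pauli matrix `X`. -/
noncomputable def Xm : Matrix (Fin 2) (Fin 2) ℂ := !![0, 1; 1, 0]

/-- The Pauli matrix `Z`. -/
noncomputable def Zm : Matrix (Fin 2) (Fin 2) ℂ := !![1, 0; 0, -1]

/-- The quantum one-time pad layer `⊗ᵢ X^{α'(i)} Z^{α(i)}`. -/
noncomputable def XZstring (n : ℕ) (α' α : Fin n → Fin 2) :
    Matrix (Fin n → Fin 2) (Fin n → Fin 2) ℂ :=
  Matrix.of fun x y => ∏ i, (Xm ^ (α' i : ℕ) * Zm ^ (α i : ℕ)) (x i) (y i)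

/-- The band of controlled-Z gates determined by an involution `π`: the diagonal
matrix with entry `(−1)^{∑_{i < π i} x i · x (π i)}` at basis index `x`. -/
noncomputable def CZband (n : ℕ) (π : Fin n → Fin n) :
    Matrix (Fin n → Fin 2) (Fin n → Fin 2) ℂ :=
  Matrix.of fun x y =>
    if x = y then
      (-1 : ℂ) ^ (∑ i ∈ Finset.univ.filter fun i => i < π i, (x i : ℕ) * (x (π i) : ℕ))
    else 0

private lemma c2_add (a b : Fin 2) :
    (((a + b : Fin 2) : ℕ) : ZMod 2) = ((a : ℕ) : ZMod 2) + ((b : ℕ) : ZMod 2) := by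
  fin_cases a <;> fin_cases b <;> rfl

private lemma neg_one_pow_congr_zmod2 {m k : ℕ} (h : (m : ZMod 2) = (k : ZMod 2)) :
    (-1:ℂ)^m = (-1:ℂ)^k := by
  rw [neg_one_pow_eq_pow_mod_two, neg_one_pow_eq_pow_mod_two (n := k),
    (ZMod.natCast_eq_natCast_iff' m k 2).mp h]

private lemma XZ_entry (a b u v : Fin 2) :
    (Xm ^ (a:ℕ) * Zm ^ (b:ℕ)) u v = if u = v + a then (-1:ℂ)^((b:ℕ)*(v:ℕ)) else 0 := by
  fin_cases a <;> fin_cases b <;> fin_cases u <;> fin_cases v <;>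
    simp [Xm, Zm, Matrix.mul_apply, Fin.sum_univ_two]

private lemma XZstring_apply (n : ℕ) (α' α : Fin n → Fin 2) (x y : Fin n → Fin 2) :
    XZstring n α' α x y =
      if x = fun i => y i + α' i then (-1:ℂ)^(∑ i, (α i : ℕ)*(y i : ℕ)) else 0 := by
  unfold XZstring
  simp only [Matrix.of_apply, XZ_entry]
  by_cases h : x = fun i => y i + α' i
  · rw [if_pos h]
    rw [Finset.prod_congr rfl (fun i _ => if_pos (congrFun h i)),
      Finset.prod_pow_eq_pow_sum]
  · rw [if_neg h]
    obtain ⟨i, hi⟩ := Function.ne_iff.mp h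
    exact Finset.prod_eq_zero (Finset.mem_univ i) (if_neg hi)

/-- **Propagating the quantum one-time pad through a band of cZ gates.**
For an involution `π` and bit strings `α, α'`, there is a sign `ω ∈ {1, −1}` such that
`CZ_π · (⊗ᵢ X^{α'(i)} Z^{α(i)}) = ω • (⊗ᵢ X^{α'(i)} Z^{α(i)+β(i)}) · CZ_π`, where
`β(i) = α'(π i)` if `π i ≠ i` and `β(i) = 0` otherwise. -/
theorem qotp_through_cz_band (n : ℕ) (hn : 1 ≤ n)
    (π : Fin n → Fin n) (hπ : Function.Involutive π)
    (α α' : Fin n → Fin 2) :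
    ∃ ω : ℂ, (ω = 1 ∨ ω = -1) ∧
      CZband n π * XZstring n α' α =
        ω • (XZstring n α' (fun i => α i + if π i = i then 0 else α' (π i)) *
          CZband n π) := by
  classical
  set S : Finset (Fin n) := Finset.univ.filter (fun i => i < π i) with hS
  set f : (Fin n → Fin 2) → ℂ :=
    fun x => (-1:ℂ) ^ (∑ i ∈ S, (x i : ℕ) * (x (π i) : ℕ)) with hf
  have hCZ : CZband n π = Matrix.diagonal f := rfl
  refine ⟨(-1:ℂ) ^ (∑ i ∈ S, (α' i : ℕ) * (α' (π i) : ℕ)), ?_, ?_⟩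
  · rcases Nat.even_or_odd (∑ i ∈ S, (α' i : ℕ) * (α' (π i) : ℕ)) with h | h
    · exact Or.inl h.neg_one_pow
    · exact Or.inr h.neg_one_pow
  ext x y
  rw [hCZ, Matrix.diagonal_mul, Matrix.smul_apply, Matrix.mul_diagonal,
    XZstring_apply, XZstring_apply]
  by_cases h : x = fun i => y i + α' i
  · rw [if_pos h, if_pos h, smul_eq_mul]
    rw [hf]
    rw [← pow_add, ← pow_add, ← pow_add]
    apply neg_one_pow_congr_zmod2
    simp only [Nat.cast_add, Nat.cast_sum, Nat.cast_mul]
    have hx : ∀ i, ((x i : ℕ) : ZMod 2) = ((y i : ℕ) : ZMod 2) + ((α' i : ℕ) : ZMod 2) := by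
      intro i; rw [congrFun h i]; exact c2_add _ _
    have expand : ∑ i ∈ S, ((x i : ℕ) : ZMod 2) * ((x (π i) : ℕ) : ZMod 2) =
        ∑ i ∈ S, ((y i : ℕ) : ZMod 2) * ((y (π i) : ℕ) : ZMod 2)
        + ∑ i ∈ S, ((α' i : ℕ) : ZMod 2) * ((α' (π i) : ℕ) : ZMod 2)
        + (∑ i ∈ S, ((y i : ℕ) : ZMod 2) * ((α' (π i) : ℕ) : ZMod 2)
          + ∑ i ∈ S, ((α' i : ℕ) : ZMod 2) * ((y (π i) : ℕ) : ZMod 2)) := by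
      simp only [hx]
      rw [← Finset.sum_add_distrib, ← Finset.sum_add_distrib, ← Finset.sum_add_distrib]
      exact Finset.sum_congr rfl fun i _ => by ring
    have hab : ∀ i, (((α i + if π i = i then 0 else α' (π i) : Fin 2) : ℕ) : ZMod 2)
          * ((y i : ℕ) : ZMod 2)
        = ((α i : ℕ) : ZMod 2) * ((y i : ℕ) : ZMod 2)
          + (((if π i = i then 0 else α' (π i) : Fin 2) : ℕ) : ZMod 2)
            * ((y i : ℕ) : ZMod 2) := by
      intro i; rw [c2_add]; ring
    have hbval : ∀ i, (((if π i = i then 0 else α' (π i) : Fin 2) : ℕ) : ZMod 2)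
          * ((y i : ℕ) : ZMod 2)
        = if ¬ π i = i then ((α' (π i) : ℕ) : ZMod 2) * ((y i : ℕ) : ZMod 2) else 0 := by
      intro i
      by_cases hi : π i = i
      · simp [hi]
      · simp [hi]
    have key : ∑ i, (((if π i = i then 0 else α' (π i) : Fin 2) : ℕ) : ZMod 2)
          * ((y i : ℕ) : ZMod 2)
        = ∑ i ∈ S, ((y i : ℕ) : ZMod 2) * ((α' (π i) : ℕ) : ZMod 2)
          + ∑ i ∈ S, ((α' i : ℕ) : ZMod 2) * ((y (π i) : ℕ) : ZMod 2) := by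
      rw [Finset.sum_congr rfl fun i _ => hbval i, ← Finset.sum_filter]
      have hsplit : Finset.univ.filter (fun i => ¬ π i = i)
          = S ∪ Finset.univ.filter (fun i => π i < i) := by
        ext i
        simp only [Finset.mem_filter, Finset.mem_union, Finset.mem_univ, true_and, hS]
        constructor
        · intro hi
          rcases lt_or_gt_of_ne (Ne.symm hi) with h1 | h1
          · exact Or.inl h1
          · exact Or.inr h1
        · rintro (h1 | h1) <;> omega
      have hdisj : Disjoint S (Finset.univ.filter (fun i => π i < i)) := by
        rw [Finset.disjoint_left]
        intro i hi hi'
        simp only [hS, Finset.mem_filter] at hi hi'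
        omega
      rw [hsplit, Finset.sum_union hdisj]
      congr 1
      · exact Finset.sum_congr rfl fun i _ => mul_comm _ _
      · refine Finset.sum_nbij' π π ?_ ?_ ?_ ?_ ?_
        · intro i hi
          simp only [Finset.mem_filter, Finset.mem_univ, true_and, hS] at hi ⊢
          rw [hπ i]; exact hi
        · intro i hi
          simp only [Finset.mem_filter, Finset.mem_univ, true_and, hS] at hi ⊢
          rw [hπ i]; exact hi
        · intro i _; exact hπ i
        · intro i _; exact hπ i
        · intro i _
          rw [hπ i]
    rw [expand, Finset.sum_congr rfl fun i _ => hab i, Finset.sum_add_distrib, key]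
    ring
  · rw [if_neg h, if_neg h, smul_eq_mul]
    ring
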